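/- arXiv:1708.02263 — 3 statements merged into one kernel-verified Lean document; each statement's English description precedes it below -/
import Mathlib

section
/- Let (X, ‖·‖) be a reflexive Banach space with functionals ψ₁,…,ψₙ, Φ satisfying (X₁)–(X₈) and (F₁)–(F₆), and suppose inf_{𝒫} I = inf_{𝒫⁺} I where I = Σψᵢ − Φ. Then the infimum of I over the Pohozaev set 𝒫 is attained: there exists u ∈ 𝒫 with I(u) = inf_{w∈𝒫} I(w), and this infimum is strictly positive. -/
open Filter

/-- Weak convergence of a sequence in a normed space. -/
def WeakConv {X : Type*} [NormedAddCommGroup X] [NormedSpace ℝ X]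
    (u : ℕ → X) (v : X) : Prop :=
  ∀ f : X →L[ℝ] ℝ, Tendsto (fun k => f (u k)) atTop (nhds (f v))

theorem stmt12 {X : Type*} [NormedAddCommGroup X] [NormedSpace ℝ X] [CompleteSpace X]
    -- reflexivity (in the form of weak sequential compactness of bounded sequences)
    (hrefl : ∀ u : ℕ → X, (∃ M, ∀ k, ‖u k‖ ≤ M) →
      ∃ (φ : ℕ → ℕ) (v : X), StrictMono φ ∧ WeakConv (u ∘ φ) v)
    {n : ℕ} (ψ : Fin (n + 1) → X → ℝ) (Φ : X → ℝ)
    (hψc : ∀ i, Continuous (ψ i)) (hΦc : Continuous Φ)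
    (lam : Fin (n + 1) → ℝ) (lamPhi : ℝ)
    (hlam : ∀ i, 0 < lam i) (hlt : ∀ i, lam i < lamPhi)
    (star : ℝ → X → X)
    (hX1 : ∀ i (t : ℝ) u, 0 ≤ t → ψ i (star t u) = t ^ lam i * ψ i u)
    (hX2 : ∀ (t : ℝ) u, 0 ≤ t → Φ (star t u) = t ^ lamPhi * Φ u)
    (hX4 : ∀ u, star 0 u = 0)
    (hX5 : ∀ u, ContinuousOn (fun t => star t u) (Set.Ici 0))
    (Xp Xr : Set X)
    (hXpcl : ∀ (u : ℕ → X) (v : X), (∀ k, u k ∈ Xp) → WeakConv u v → v ∈ Xp)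
    (hXrcl : ∀ (u : ℕ → X) (v : X), (∀ k, u k ∈ Xr) → WeakConv u v → v ∈ Xr)
    (Q : X → X) (hQ : ∀ u ∈ Xp, Q u ∈ Xr)
    (hX6 : ∀ u ∈ Xp, ∀ i, ψ i (Q u) ≤ ψ i u)
    (hX7 : ∀ u ∈ Xp, Φ u ≤ Φ (Q u))
    (hX8 : ∀ u ∈ Xr, ∀ t : ℝ, 0 ≤ t → star t u ∈ Xr)
    (hF1 : Φ 0 = 0 ∧ ∃ u, 0 < Φ u)
    (hF2 : ∀ i u, 0 ≤ ψ i u) (hF2' : ∀ u, (∑ i, ψ i u) = 0 ↔ u = 0)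
    (hF3 : ∃ r > 0, ∀ u : X, 0 < ‖u‖ → ‖u‖ < r → lamPhi * Φ u < ∑ i, lam i * ψ i u)
    (hF4 : ∀ u : ℕ → X, (∀ k, 0 ≤ Φ (u k)) →
      Tendsto (fun k => ∑ i, ψ i (u k)) atTop (nhds 0) →
      Tendsto (fun k => ‖u k‖) atTop (nhds 0))
    (hF4' : ∀ u : ℕ → X, (∀ k, 0 ≤ Φ (u k)) →
      (∃ M, ∀ k, (∑ i, ψ i (u k)) ≤ M) → ∃ M', ∀ k, ‖u k‖ ≤ M')
    (hF5 : ∀ (u : ℕ → X) (v : X), (∀ k, u k ∈ Xr) → WeakConv u v →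
      limsup (fun k => Φ (u k)) atTop ≤ Φ v)
    (hF6 : ∀ (u : ℕ → X) (v : X), WeakConv u v →
      ∀ i, ψ i v ≤ liminf (fun k => ψ i (u k)) atTop)
    (hinf : sInf ((fun u => (∑ i, ψ i u) - Φ u) ''
        {u : X | u ≠ 0 ∧ (∑ i, lam i * ψ i u) = lamPhi * Φ u})
      = sInf ((fun u => (∑ i, ψ i u) - Φ u) ''
        ({u : X | u ≠ 0 ∧ (∑ i, lam i * ψ i u) = lamPhi * Φ u} ∩ Xp))) :
    ∃ u : X, (u ≠ 0 ∧ (∑ i, lam i * ψ i u) = lamPhi * Φ u) ∧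
      (∀ w : X, w ≠ 0 → (∑ i, lam i * ψ i w) = lamPhi * Φ w →
        (∑ i, ψ i u) - Φ u ≤ (∑ i, ψ i w) - Φ w) ∧
      0 < (∑ i, ψ i u) - Φ u := by
  classical
  obtain ⟨r, hr, hF3⟩ := hF3
  have hlamPhi : (0:ℝ) < lamPhi := lt_trans (hlam 0) (hlt 0)
  set I : X → ℝ := fun u => (∑ i, ψ i u) - Φ u with hIdef
  set P : Set X := {u : X | u ≠ 0 ∧ (∑ i, lam i * ψ i u) = lamPhi * Φ u} with hPdef
  set c : Fin (n+1) → ℝ := fun i => 1 - lam i / lamPhi with hcdef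
  have hc : ∀ i, 0 < c i := by
    intro i
    have h1 : lam i / lamPhi < 1 := (div_lt_one hlamPhi).2 (hlt i)
    simp only [hcdef]
    linarith
  obtain ⟨i0, -, hi0⟩ := Finset.exists_min_image Finset.univ c ⟨0, Finset.mem_univ 0⟩
  have hc0 : 0 < c i0 := hc i0
  have hpos : ∀ u : X, u ≠ 0 → 0 < ∑ i, ψ i u := by
    intro u hu
    rcases (Finset.sum_nonneg fun i _ => hF2 i u).lt_or_eq with h | h
    · exact h
    · exact absurd ((hF2' u).1 h.symm) hu
  have hPhiP : ∀ u : X, (∑ i, lam i * ψ i u) = lamPhi * Φ u → 0 ≤ Φ u := by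
    intro u hu
    have h1 : 0 ≤ ∑ i, lam i * ψ i u :=
      Finset.sum_nonneg fun i _ => mul_nonneg (hlam i).le (hF2 i u)
    nlinarith
  have hIeq : ∀ u : X, (∑ i, lam i * ψ i u) = lamPhi * Φ u → I u = ∑ i, c i * ψ i u := by
    intro u hu
    have h2 : ∑ i, c i * ψ i u = (∑ i, ψ i u) - (∑ i, lam i * ψ i u)/lamPhi := by
      rw [Finset.sum_div, ← Finset.sum_sub_distrib]
      refine Finset.sum_congr rfl fun i _ => ?_
      simp only [hcdef]
      field_simp
    rw [h2, hu, mul_div_cancel_left₀ _ hlamPhi.ne']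
  have hsum_le : ∀ u : X, c i0 * (∑ i, ψ i u) ≤ ∑ i, c i * ψ i u := by
    intro u
    rw [Finset.mul_sum]
    exact Finset.sum_le_sum fun i _ =>
      mul_le_mul_of_nonneg_right (hi0 i (Finset.mem_univ i)) (hF2 i u)
  -- the crossing lemma: dilating a suitable v onto the Pohozaev manifold
  have crossing : ∀ v : X, 0 < (∑ i, ψ i v) → ∀ T : ℝ, 0 < T →
      (∑ i, lam i * ψ i (star T v)) ≤ lamPhi * Φ (star T v) →
      ∃ t : ℝ, 0 < t ∧ t ≤ T ∧ star t v ∈ P := by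
    intro v hv T hT hle
    obtain ⟨iv, hiv⟩ : ∃ i, 0 < ψ i v := by
      by_contra h
      push_neg at h
      have : (∑ i, ψ i v) ≤ 0 := Finset.sum_nonpos fun i _ => h i
      linarith
    set g : ℝ → ℝ := fun s => (∑ i, lam i * ψ i (star s v)) - lamPhi * Φ (star s v) with hgdef
    have hgc : ContinuousOn g (Set.Icc 0 T) := by
      have hstar : ContinuousOn (fun s => star s v) (Set.Icc 0 T) :=
        (hX5 v).mono Set.Icc_subset_Ici_self
      apply ContinuousOn.sub
      · apply continuousOn_finset_sum
        intro i _
        exact (continuous_const.mul (hψc i)).comp_continuousOn hstar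
      · exact (continuous_const.mul hΦc).comp_continuousOn hstar
    -- find a small ε with g ε > 0
    have hnorm : Tendsto (fun s => ‖star s v‖) (nhdsWithin 0 (Set.Ici 0)) (nhds 0) := by
      have h0 : Tendsto (fun s => star s v) (nhdsWithin 0 (Set.Ici 0)) (nhds (star 0 v)) :=
        ((hX5 v) 0 (Set.mem_Ici.2 le_rfl)).tendsto
      rw [hX4 v] at h0
      simpa [Function.comp_def] using (continuous_norm.tendsto (0:X)).comp h0
    have hev1 : ∀ᶠ s in nhdsWithin 0 (Set.Ioi 0), ‖star s v‖ < r :=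
      (hnorm.eventually (gt_mem_nhds hr)).filter_mono
        (nhdsWithin_mono _ Set.Ioi_subset_Ici_self)
    have hev2 : ∀ᶠ s in nhdsWithin 0 (Set.Ioi 0), s < T :=
      (eventually_lt_nhds hT).filter_mono nhdsWithin_le_nhds
    have hev3 : ∀ᶠ s in nhdsWithin (0:ℝ) (Set.Ioi 0), s ∈ Set.Ioi (0:ℝ) :=
      self_mem_nhdsWithin
    obtain ⟨ε, ⟨hεr, hεT⟩, hε⟩ := ((hev1.and hev2).and hev3).exists
    have hε0 : (0:ℝ) < ε := hε
    have hψpos : ∀ s : ℝ, 0 < s → 0 < ∑ i, ψ i (star s v) := by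
      intro s hs
      refine Finset.sum_pos' (fun j _ => hF2 j _) ⟨iv, Finset.mem_univ iv, ?_⟩
      rw [hX1 iv s v hs.le]
      exact mul_pos (Real.rpow_pos_of_pos hs _) hiv
    have hsne : ∀ s : ℝ, 0 < s → star s v ≠ 0 := by
      intro s hs h
      exact (hψpos s hs).ne' ((hF2' _).2 h)
    have hgε : 0 < g ε := by
      have hn0 : 0 < ‖star ε v‖ := norm_pos_iff.2 (hsne ε hε0)
      have := hF3 (star ε v) hn0 hεr
      simp only [hgdef]
      linarith
    have hgT : g T ≤ 0 := by
      simp only [hgdef]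
      linarith
    have hmem : (0:ℝ) ∈ Set.Icc (g T) (g ε) := ⟨hgT, hgε.le⟩
    obtain ⟨t, htmem, hgt⟩ :=
      intermediate_value_Icc' hεT.le (hgc.mono (Set.Icc_subset_Icc_left hε0.le)) hmem
    have ht0 : 0 < t := lt_of_lt_of_le hε0 htmem.1
    refine ⟨t, ht0, htmem.2, hsne t ht0, ?_⟩
    simp only [hgdef] at hgt
    linarith [sub_eq_zero.1 hgt]
  -- Step 0 : P is nonempty
  obtain ⟨u₁, hu₁⟩ := hF1.2
  have hu₁ne : u₁ ≠ 0 := by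
    intro h
    rw [h, hF1.1] at hu₁
    exact lt_irrefl 0 hu₁
  have hT : ∃ T : ℝ, 1 ≤ T ∧
      (∑ i, lam i * ψ i (star T u₁)) ≤ lamPhi * Φ (star T u₁) := by
    have htend : Tendsto (fun T : ℝ => ∑ i, lam i * (T ^ (lam i - lamPhi) * ψ i u₁))
        atTop (nhds 0) := by
      have h0 : (0:ℝ) = ∑ i : Fin (n+1), (0:ℝ) := by simp
      rw [h0]
      apply tendsto_finset_sum
      intro i _
      have h1 : Tendsto (fun T : ℝ => T ^ (lam i - lamPhi)) atTop (nhds 0) := by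
        have h2 : lam i - lamPhi = -(lamPhi - lam i) := by ring
        rw [h2]
        exact tendsto_rpow_neg_atTop (by linarith [hlt i])
      have := (h1.mul_const (ψ i u₁)).const_mul (lam i)
      simpa using this
    have hev : ∀ᶠ T in atTop, (∑ i, lam i * (T ^ (lam i - lamPhi) * ψ i u₁))
        < lamPhi * Φ u₁ := htend.eventually (gt_mem_nhds (mul_pos hlamPhi hu₁))
    obtain ⟨T, hT1, hTlt⟩ := ((eventually_ge_atTop (1:ℝ)).and hev).exists
    have hT0 : (0:ℝ) < T := lt_of_lt_of_le one_pos hT1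
    refine ⟨T, hT1, ?_⟩
    rw [hX2 T u₁ hT0.le]
    have h2 : (∑ i, lam i * ψ i (star T u₁))
        = (∑ i, lam i * (T ^ (lam i - lamPhi) * ψ i u₁)) * T ^ lamPhi := by
      rw [Finset.sum_mul]
      refine Finset.sum_congr rfl fun i _ => ?_
      rw [hX1 i T u₁ hT0.le]
      have hT' : T ^ lam i = T ^ (lam i - lamPhi) * T ^ lamPhi := by
        rw [← Real.rpow_add hT0]
        norm_num
      rw [hT']
      ring
    calc (∑ i, lam i * ψ i (star T u₁))
        = (∑ i, lam i * (T ^ (lam i - lamPhi) * ψ i u₁)) * T ^ lamPhi := h2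
      _ ≤ (lamPhi * Φ u₁) * T ^ lamPhi :=
          mul_le_mul_of_nonneg_right hTlt.le (Real.rpow_nonneg hT0.le _)
      _ = lamPhi * (T ^ lamPhi * Φ u₁) := by ring
  obtain ⟨T₁, hT₁1, hT₁le⟩ := hT
  obtain ⟨t₁, ht₁0, -, hw₁P⟩ :=
    crossing u₁ (hpos u₁ hu₁ne) T₁ (lt_of_lt_of_le one_pos hT₁1) hT₁le
  -- the infimum m
  have hPne : (I '' P).Nonempty := ⟨I (star t₁ u₁), Set.mem_image_of_mem _ hw₁P⟩
  have hInonneg : ∀ u ∈ P, 0 ≤ I u := by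
    intro u hu
    rw [hIeq u hu.2]
    exact Finset.sum_nonneg fun i _ => mul_nonneg (hc i).le (hF2 i u)
  have hbdd : BddBelow (I '' P) := by
    refine ⟨0, ?_⟩
    rintro x ⟨u, hu, rfl⟩
    exact hInonneg u hu
  set m := sInf (I '' P) with hm
  have hmle : ∀ u ∈ P, m ≤ I u := fun u hu => csInf_le hbdd (Set.mem_image_of_mem _ hu)
  have hm0 : 0 ≤ m := by
    apply le_csInf hPne
    rintro x ⟨u, hu, rfl⟩
    exact hInonneg u hu
  have hfrac : ∀ k : ℕ, (0:ℝ) < 1/(k+1) := by intro k; positivity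
  have hfrtend : Tendsto (fun k : ℕ => 1/((k:ℝ)+1)) atTop (nhds 0) :=
    tendsto_one_div_add_atTop_nhds_zero_nat
  -- positivity of m
  have hmpos : 0 < m := by
    rcases hm0.lt_or_eq with h | h
    · exact h
    exfalso
    have hseq : ∀ k : ℕ, ∃ u, u ∈ P ∧ I u < 1/(k+1) := by
      intro k
      have hlt' : m < 1/(k+1) := by rw [← h]; exact hfrac k
      obtain ⟨x, ⟨u, hu, rfl⟩, hx⟩ := exists_lt_of_csInf_lt hPne hlt'
      exact ⟨u, hu, hx⟩
    choose u₀ hu₀ hIu₀ using hseq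
    have hsum0 : Tendsto (fun k => ∑ i, ψ i (u₀ k)) atTop (nhds 0) := by
      apply squeeze_zero (fun k => Finset.sum_nonneg fun i _ => hF2 i _)
        (g := fun k : ℕ => (1/((k:ℝ)+1)) / c i0)
      · intro k
        have h1 : c i0 * (∑ i, ψ i (u₀ k)) ≤ I (u₀ k) := by
          rw [hIeq _ (hu₀ k).2]
          exact hsum_le (u₀ k)
        have h2 := (h1.trans_lt (hIu₀ k)).le
        rw [le_div_iff₀ hc0]
        linarith
      · have := hfrtend.div_const (c i0)
        simpa using this
    have hnormlim := hF4 u₀ (fun k => hPhiP _ (hu₀ k).2) hsum0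
    obtain ⟨k, hk⟩ := (hnormlim.eventually (gt_mem_nhds hr)).exists
    have hne := (hu₀ k).1
    exact lt_irrefl _ ((hF3 _ (norm_pos_iff.2 hne) hk).trans_eq (hu₀ k).2)
  -- P⁺ is nonempty
  have hPpne : (I '' (P ∩ Xp)).Nonempty := by
    by_contra h
    rw [Set.not_nonempty_iff_eq_empty] at h
    rw [h, Real.sInf_empty] at hinf
    first
    | exact hmpos.ne' hinf
    | exact hmpos.ne' (hm.trans hinf)
  -- minimizing sequence in P⁺
  have hseq : ∀ k : ℕ, ∃ u, (u ∈ P ∧ u ∈ Xp) ∧ I u < m + 1/(k+1) := by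
    intro k
    have hlt' : sInf (I '' (P ∩ Xp)) < m + 1/(k+1) := by
      first
      | (rw [← hinf]; linarith [hfrac k])
      | (rw [← hinf, ← hm]; linarith [hfrac k])
    obtain ⟨x, ⟨u, hu, rfl⟩, hx⟩ := exists_lt_of_csInf_lt hPpne hlt'
    exact ⟨u, hu, hx⟩
  choose u huP hIu using hseq
  set v : ℕ → X := fun k => Q (u k) with hv
  have hvr : ∀ k, v k ∈ Xr := fun k => hQ _ (huP k).2
  have hψv : ∀ k i, ψ i (v k) ≤ ψ i (u k) := fun k => hX6 _ (huP k).2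
  have hΦv : ∀ k, Φ (u k) ≤ Φ (v k) := fun k => hX7 _ (huP k).2
  have hvne : ∀ k, (0:ℝ) < ∑ i, ψ i (v k) := by
    intro k
    rcases (Finset.sum_nonneg fun i _ => hF2 i (v k)).lt_or_eq with h | h
    · exact h
    exfalso
    have hv0 : v k = 0 := (hF2' _).1 h.symm
    have hΦ0 : Φ (v k) = 0 := by rw [hv0]; exact hF1.1
    have h1 : 0 ≤ Φ (u k) := hPhiP _ (huP k).1.2
    have h2 : Φ (u k) = 0 := le_antisymm (by rw [← hΦ0]; exact hΦv k) h1
    have h3 : (∑ i, lam i * ψ i (u k)) = 0 := by rw [(huP k).1.2, h2, mul_zero]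
    have h4 : ∀ i, ψ i (u k) = 0 := by
      intro i
      have h5 := (Finset.sum_eq_zero_iff_of_nonneg
        (fun i _ => mul_nonneg (hlam i).le (hF2 i (u k)))).1 h3 i (Finset.mem_univ i)
      exact (mul_eq_zero.1 h5).resolve_left (hlam i).ne'
    exact (huP k).1.1 ((hF2' _).1 (by simp [h4]))
  have hone : ∀ x : X, (∀ i, ψ i (star 1 x) = ψ i x) ∧ Φ (star 1 x) = Φ x := by
    intro x
    constructor
    · intro i
      rw [hX1 i 1 x zero_le_one, Real.one_rpow, one_mul]
    · rw [hX2 1 x zero_le_one, Real.one_rpow, one_mul]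
  have hcr : ∀ k, ∃ s : ℝ, 0 < s ∧ s ≤ 1 ∧ star s (v k) ∈ P := by
    intro k
    apply crossing (v k) (hvne k) 1 one_pos
    rw [(hone (v k)).2]
    have e1 : (∑ i, lam i * ψ i (star 1 (v k))) = ∑ i, lam i * ψ i (v k) :=
      Finset.sum_congr rfl fun i _ => by rw [(hone (v k)).1 i]
    rw [e1]
    calc (∑ i, lam i * ψ i (v k)) ≤ ∑ i, lam i * ψ i (u k) :=
          Finset.sum_le_sum fun i _ => mul_le_mul_of_nonneg_left (hψv k i) (hlam i).le
      _ = lamPhi * Φ (u k) := (huP k).1.2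
      _ ≤ lamPhi * Φ (v k) := mul_le_mul_of_nonneg_left (hΦv k) hlamPhi.le
  choose t ht0 ht1 hwP using hcr
  set w : ℕ → X := fun k => star (t k) (v k) with hwdef
  have hwr : ∀ k, w k ∈ Xr := fun k => hX8 _ (hvr k) _ (ht0 k).le
  have hψw : ∀ k i, ψ i (w k) ≤ ψ i (u k) := by
    intro k i
    have h1 : ψ i (w k) = (t k) ^ lam i * ψ i (v k) := hX1 i _ _ (ht0 k).le
    rw [h1]
    calc (t k) ^ lam i * ψ i (v k) ≤ 1 * ψ i (v k) :=
          mul_le_mul_of_nonneg_right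
            (Real.rpow_le_one (ht0 k).le (ht1 k) (hlam i).le) (hF2 i _)
      _ = ψ i (v k) := one_mul _
      _ ≤ ψ i (u k) := hψv k i
  have hIw_le : ∀ k, I (w k) ≤ I (u k) := by
    intro k
    rw [hIeq _ (hwP k).2, hIeq _ (huP k).1.2]
    exact Finset.sum_le_sum fun i _ => mul_le_mul_of_nonneg_left (hψw k i) (hc i).le
  have hIw_lt : ∀ k, I (w k) < m + 1/(k+1) := fun k => lt_of_le_of_lt (hIw_le k) (hIu k)
  have hIw_ge : ∀ k, m ≤ I (w k) := fun k => hmle _ (hwP k)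
  have hsb : ∀ k, (∑ i, ψ i (w k)) ≤ (m+1)/(c i0) := by
    intro k
    have h1 : c i0 * (∑ i, ψ i (w k)) ≤ I (w k) := by
      rw [hIeq _ (hwP k).2]
      exact hsum_le _
    have h2 : (1:ℝ)/((k:ℝ)+1) ≤ 1 := by
      rw [div_le_one (by positivity)]
      have : (0:ℝ) ≤ (k:ℝ) := Nat.cast_nonneg k
      linarith
    have h3 : I (w k) ≤ m + 1 := by
      have h4 := (hIw_lt k).le
      have h5 : m + 1/((k:ℝ)+1) ≤ m + 1 := by linarith
      exact h4.trans h5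
    rw [le_div_iff₀ hc0]
    linarith
  have hΦw : ∀ k, 0 ≤ Φ (w k) := fun k => hPhiP _ (hwP k).2
  obtain ⟨M', hM'⟩ := hF4' w hΦw ⟨(m+1)/(c i0), hsb⟩
  obtain ⟨φ, ub, hφ, hweak⟩ := hrefl w ⟨M', hM'⟩
  have hψub : ∀ k i, ψ i (w k) ≤ (m+1)/(c i0) := by
    intro k i
    calc ψ i (w k) ≤ ∑ j, ψ j (w k) :=
          Finset.single_le_sum (fun j _ => hF2 j _) (Finset.mem_univ i)
      _ ≤ _ := hsb k
  -- extract a further subsequence making all ψ i converge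
  set A : ℕ → (Fin (n+1) → ℝ) := fun k i => ψ i (w (φ k)) with hA
  have hAmem : ∀ k, A k ∈ Set.Icc (0 : Fin (n+1) → ℝ) (fun _ => (m+1)/(c i0)) := by
    intro k
    constructor
    · intro i
      exact hF2 i _
    · intro i
      exact hψub (φ k) i
  obtain ⟨L, hLmem, φ₂, hφ₂, hAlim⟩ := (isCompact_Icc).tendsto_subseq hAmem
  have hL0 : ∀ i, 0 ≤ L i := fun i => hLmem.1 i
  set σ : ℕ → ℕ := fun k => φ (φ₂ k) with hσ
  have hσmono : StrictMono σ := hφ.comp hφ₂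
  set W : ℕ → X := fun k => w (σ k) with hW
  have hWweak : WeakConv W ub := by
    intro f
    exact (hweak f).comp hφ₂.tendsto_atTop
  have hψWlim : ∀ i, Tendsto (fun k => ψ i (W k)) atTop (nhds (L i)) := by
    intro i
    exact tendsto_pi_nhds.1 hAlim i
  have hWP : ∀ k, W k ∈ P := fun k => hwP (σ k)
  have hWr : ∀ k, W k ∈ Xr := fun k => hwr (σ k)
  set LΦ : ℝ := (∑ i, lam i * L i) / lamPhi with hLΦ
  have hΦWlim : Tendsto (fun k => Φ (W k)) atTop (nhds LΦ) := by
    have h1 : ∀ k, Φ (W k) = (∑ i, lam i * ψ i (W k)) / lamPhi := by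
      intro k
      rw [eq_div_iff hlamPhi.ne']
      linarith [(hWP k).2]
    simp only [h1]
    exact (tendsto_finset_sum _ fun i _ => (hψWlim i).const_mul (lam i)).div_const lamPhi
  have hΦub : LΦ ≤ Φ ub := by
    have h1 := hF5 W ub hWr hWweak
    rwa [hΦWlim.limsup_eq] at h1
  have hψub' : ∀ i, ψ i ub ≤ L i := by
    intro i
    have h1 := hF6 W ub hWweak i
    rwa [(hψWlim i).liminf_eq] at h1
  have hIWlim : Tendsto (fun k => I (W k)) atTop (nhds (∑ i, c i * L i)) := by
    have h1 : ∀ k, I (W k) = ∑ i, c i * ψ i (W k) := fun k => hIeq _ (hWP k).2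
    simp only [h1]
    exact tendsto_finset_sum _ fun i _ => (hψWlim i).const_mul (c i)
  have hIWm : Tendsto (fun k => I (W k)) atTop (nhds m) := by
    have hub2 : ∀ k : ℕ, I (W k) ≤ m + 1/((k:ℝ)+1) := by
      intro k
      have h1 := hIw_lt (σ k)
      have h2 : (1:ℝ)/((σ k : ℝ)+1) ≤ 1/((k:ℝ)+1) := by
        apply one_div_le_one_div_of_le (by positivity)
        have : (k:ℝ) ≤ (σ k : ℝ) := Nat.cast_le.2 (hσmono.le_apply)
        linarith
      have h3 : I (W k) < m + 1/((σ k : ℝ)+1) := h1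
      linarith
    have hlb : ∀ k : ℕ, m ≤ I (W k) := fun k => hIw_ge (σ k)
    apply tendsto_of_tendsto_of_tendsto_of_le_of_le tendsto_const_nhds ?_ hlb hub2
    have := hfrtend.const_add m
    simpa using this
  have hcLm : (∑ i, c i * L i) = m := tendsto_nhds_unique hIWlim hIWm
  -- the weak limit is nonzero
  have hubne : ub ≠ 0 := by
    intro h
    have hΦ0 : Φ ub = 0 := by rw [h]; exact hF1.1
    have h1 : (∑ i, lam i * L i) ≤ 0 := by
      rw [hΦ0] at hΦub
      rw [hLΦ] at hΦub
      have h' := (div_le_iff₀ hlamPhi).1 hΦub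
      simpa using h'
    have h2' : (∑ i, lam i * L i) = 0 :=
      le_antisymm h1 (Finset.sum_nonneg fun i _ => mul_nonneg (hlam i).le (hL0 i))
    have h2 : ∀ i, L i = 0 := by
      intro i
      have h5 := (Finset.sum_eq_zero_iff_of_nonneg
        (fun i _ => mul_nonneg (hlam i).le (hL0 i))).1 h2' i (Finset.mem_univ i)
      exact (mul_eq_zero.1 h5).resolve_left (hlam i).ne'
    have : m = 0 := by
      rw [← hcLm]
      simp [h2]
    exact hmpos.ne' this
  -- Pohozaev inequality for the limit, and final dilation
  have hub_in : (∑ i, lam i * ψ i ub) ≤ lamPhi * Φ ub := by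
    calc (∑ i, lam i * ψ i ub) ≤ ∑ i, lam i * L i :=
          Finset.sum_le_sum fun i _ => mul_le_mul_of_nonneg_left (hψub' i) (hlam i).le
      _ = lamPhi * LΦ := by
          rw [hLΦ]
          field_simp
      _ ≤ lamPhi * Φ ub := mul_le_mul_of_nonneg_left hΦub hlamPhi.le
  have hfin : ∃ s : ℝ, 0 < s ∧ s ≤ 1 ∧ star s ub ∈ P := by
    apply crossing ub (hpos ub hubne) 1 one_pos
    rw [(hone ub).2]
    have e1 : (∑ i, lam i * ψ i (star 1 ub)) = ∑ i, lam i * ψ i ub :=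
      Finset.sum_congr rfl fun i _ => by rw [(hone ub).1 i]
    rw [e1]
    exact hub_in
  obtain ⟨s, hs0, hs1, hsP⟩ := hfin
  have hψs : ∀ i, ψ i (star s ub) ≤ L i := by
    intro i
    rw [hX1 i s ub hs0.le]
    calc s ^ lam i * ψ i ub ≤ 1 * ψ i ub :=
          mul_le_mul_of_nonneg_right (Real.rpow_le_one hs0.le hs1 (hlam i).le) (hF2 i ub)
      _ = ψ i ub := one_mul _
      _ ≤ L i := hψub' i
  have hIs : I (star s ub) ≤ m := by
    rw [hIeq _ hsP.2, ← hcLm]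
    exact Finset.sum_le_sum fun i _ => mul_le_mul_of_nonneg_left (hψs i) (hc i).le
  have hIs' : I (star s ub) = m := le_antisymm hIs (hmle _ hsP)
  refine ⟨star s ub, ⟨hsP.1, hsP.2⟩, ?_, ?_⟩
  · intro w' hw1 hw2
    have h1 : m ≤ I w' := hmle w' ⟨hw1, hw2⟩
    have h2 : I (star s ub) ≤ I w' := hIs'.le.trans h1
    exact h2
  · show (0:ℝ) < I (star s ub)
    rw [hIs']
    exact hmpos
end

section
/- In the setting of the abstract theorem (assumptions (X₁)–(X₈), (F₁)–(F₆)): for every u ∈ X with Φ(u) > 0 there exists a unique t* > 0 such that u_{t*} = ∗(t*, u) lies in the Pohozaev set 𝒫, and I(u_{t*}) = max_{t≥0} I(u_t). Moreover, if u ∈ 𝒫 then the maximizer is t* = 1, i.e. I(u) = max_{t≥0} I(u_t). -/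
open Real Finset

-- scalar weighted AM-GM consequence: for 0<a<b, s≥0:  b * s^a ≤ a * s^b + (b - a)
lemma scalar_ineq {a b s : ℝ} (ha : 0 < a) (hab : a < b) (hs : 0 ≤ s) :
    b * s ^ a ≤ a * s ^ b + (b - a) := by
  have hb : 0 < b := ha.trans hab
  have h1 : (s ^ b) ^ (a / b) * (1 : ℝ) ^ (1 - a / b) ≤ (a / b) * s ^ b + (1 - a / b) * 1 :=
    Real.geom_mean_le_arith_mean2_weighted (by positivity)
      (by rw [sub_nonneg]; exact (div_le_one hb).2 hab.le)
      (Real.rpow_nonneg hs b) zero_le_one (by ring)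
  rw [Real.one_rpow, mul_one, mul_one, ← Real.rpow_mul hs,
    mul_div_cancel₀ _ hb.ne'] at h1
  have := mul_le_mul_of_nonneg_left h1 hb.le
  calc b * s ^ a ≤ b * (a / b * s ^ b + (1 - a / b)) := this
    _ = a * s ^ b + (b - a) := by field_simp

-- core: fibering map is maximized at s = 1 under the Pohozaev constraint
lemma core_ineq {n : ℕ} (lam : Fin (n + 1) → ℝ) (lamPhi : ℝ)
    (hlam : ∀ i, 0 < lam i) (hlt : ∀ i, lam i < lamPhi)
    (p : Fin (n + 1) → ℝ) (q : ℝ) (hp : ∀ i, 0 ≤ p i)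
    (heq : ∑ i, lam i * p i = lamPhi * q) {s : ℝ} (hs : 0 ≤ s) :
    (∑ i, s ^ lam i * p i) - s ^ lamPhi * q ≤ (∑ i, p i) - q := by
  have hbΦ : 0 < lamPhi := (hlam 0).trans (hlt 0)
  have key : ∑ i, (s ^ lam i * p i - p i) ≤ (s ^ lamPhi - 1) * q := by
    calc ∑ i, (s ^ lam i * p i - p i)
        ≤ ∑ i, (lam i / lamPhi) * (s ^ lamPhi - 1) * p i := by
          refine Finset.sum_le_sum fun i _ => ?_
          have h1 := scalar_ineq (hlam i) (hlt i) hs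
          have h2 : s ^ lam i - 1 ≤ lam i / lamPhi * (s ^ lamPhi - 1) := by
            rw [div_mul_eq_mul_div, le_div_iff₀ hbΦ]; nlinarith
          have := mul_le_mul_of_nonneg_right h2 (hp i)
          linarith [this]
      _ = (s ^ lamPhi - 1) / lamPhi * ∑ i, lam i * p i := by
          rw [Finset.mul_sum]; refine Finset.sum_congr rfl fun i _ => ?_; field_simp
      _ = (s ^ lamPhi - 1) * q := by rw [heq]; field_simp
  rw [Finset.sum_sub_distrib] at key
  linarith

theorem stmt13 {X : Type*} [NormedAddCommGroup X] {n : ℕ}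
    (ψ : Fin (n + 1) → X → ℝ) (Φ : X → ℝ) (lam : Fin (n + 1) → ℝ) (lamPhi : ℝ)
    (hlam : ∀ i, 0 < lam i) (hlt : ∀ i, lam i < lamPhi)
    (star : ℝ → X → X)
    (hX1 : ∀ i (t : ℝ) u, 0 ≤ t → ψ i (star t u) = t ^ lam i * ψ i u)
    (hX2 : ∀ (t : ℝ) u, 0 ≤ t → Φ (star t u) = t ^ lamPhi * Φ u)
    (hX4 : ∀ u, star 0 u = 0) (hΦ0 : Φ 0 = 0)
    (hψ : ∀ i u, 0 ≤ ψ i u)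
    (hJ : ∀ u, (∑ i, ψ i u) = 0 ↔ u = 0) :
    (∀ u : X, 0 < Φ u →
      ∃ tstar : ℝ,
        (0 < tstar ∧
          (star tstar u ≠ 0 ∧
            (∑ i, lam i * ψ i (star tstar u)) = lamPhi * Φ (star tstar u)) ∧
          (∀ t : ℝ, 0 ≤ t →
            (∑ i, ψ i (star t u)) - Φ (star t u) ≤
              (∑ i, ψ i (star tstar u)) - Φ (star tstar u))) ∧
        (∀ t : ℝ, 0 < t →
          star t u ≠ 0 →
          (∑ i, lam i * ψ i (star t u)) = lamPhi * Φ (star t u) → t = tstar)) ∧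
    (∀ u : X, u ≠ 0 → (∑ i, lam i * ψ i u) = lamPhi * Φ u →
      ∀ t : ℝ, 0 ≤ t → (∑ i, ψ i (star t u)) - Φ (star t u) ≤ (∑ i, ψ i u) - Φ u) := by
  have hbΦ : 0 < lamPhi := (hlam 0).trans (hlt 0)
  constructor
  · intro u hu
    have hune : u ≠ 0 := by
      intro h; rw [h, hΦ0] at hu; exact lt_irrefl 0 hu
    obtain ⟨j, hj⟩ : ∃ j, 0 < ψ j u := by
      by_contra h
      push_neg at h
      exact hune ((hJ u).1 (le_antisymm (Finset.sum_nonpos fun i _ => h i)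
        (Finset.sum_nonneg fun i _ => hψ i u)))
    set F : ℝ → ℝ := fun t => ∑ i, lam i * ψ i u * t ^ (lam i - lamPhi) with hF
    set T : ℝ := lamPhi * Φ u with hTdef
    have hT : 0 < T := mul_pos hbΦ hu
    have hc : 0 < lam j * ψ j u := mul_pos (hlam j) hj
    have hcoeff : ∀ i, 0 ≤ lam i * ψ i u := fun i => mul_nonneg (hlam i).le (hψ i u)
    have hFanti : StrictAntiOn F (Set.Ioi 0) := by
      intro x hx y hy hxy
      simp only [hF]
      refine Finset.sum_lt_sum (fun i _ => ?_) ⟨j, Finset.mem_univ j, ?_⟩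
      · exact mul_le_mul_of_nonneg_left
          (Real.rpow_le_rpow_of_nonpos hx hxy.le (by linarith [hlt i])) (hcoeff i)
      · exact mul_lt_mul_of_pos_left
          (Real.rpow_lt_rpow_of_neg hx hxy (by linarith [hlt j])) hc
    have hFlow : ∀ t : ℝ, 0 < t → lam j * ψ j u * t ^ (lam j - lamPhi) ≤ F t := by
      intro t ht
      simp only [hF]
      exact Finset.single_le_sum (f := fun i => lam i * ψ i u * t ^ (lam i - lamPhi))
        (fun i _ => mul_nonneg (hcoeff i) (Real.rpow_nonneg ht.le _)) (Finset.mem_univ j)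
    set a : ℝ := (T / (lam j * ψ j u)) ^ (lam j - lamPhi)⁻¹ with hadef
    have hTc : 0 < T / (lam j * ψ j u) := div_pos hT hc
    have ha : 0 < a := Real.rpow_pos_of_pos hTc _
    have hej : lam j - lamPhi ≠ 0 := sub_ne_zero.2 (hlt j).ne
    have haF : T ≤ F a := by
      have h1 : a ^ (lam j - lamPhi) = T / (lam j * ψ j u) := by
        rw [hadef, ← Real.rpow_mul hTc.le, inv_mul_cancel₀ hej, Real.rpow_one]
      calc T = lam j * ψ j u * (T / (lam j * ψ j u)) := by rw [mul_div_cancel₀ _ hc.ne']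
        _ = lam j * ψ j u * a ^ (lam j - lamPhi) := by rw [h1]
        _ ≤ F a := hFlow a ha
    set M : ℝ := Finset.univ.sup' Finset.univ_nonempty lam with hMdef
    have hM : ∀ i, lam i ≤ M := fun i => Finset.le_sup' lam (Finset.mem_univ i)
    have hMl : M < lamPhi := (Finset.sup'_lt_iff _).2 fun i _ => hlt i
    set S : ℝ := ∑ i, lam i * ψ i u with hSdef
    have hS : 0 < S := Finset.sum_pos' (fun i _ => hcoeff i) ⟨j, Finset.mem_univ j, hc⟩
    set t0 : ℝ := (T / S) ^ (M - lamPhi)⁻¹ with ht0def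
    have hTS : 0 < T / S := div_pos hT hS
    have ht0 : 0 < t0 := Real.rpow_pos_of_pos hTS _
    set b : ℝ := max 1 (max a t0) with hbdef
    have hb1 : (1:ℝ) ≤ b := le_max_left _ _
    have hab : a ≤ b := le_trans (le_max_left a t0) (le_max_right _ _)
    have ht0b : t0 ≤ b := le_trans (le_max_right a t0) (le_max_right _ _)
    have hMe : M - lamPhi ≠ 0 := sub_ne_zero.2 hMl.ne
    have hbM : b ^ (M - lamPhi) ≤ T / S := by
      have h1 : t0 ^ (M - lamPhi) = T / S := by
        rw [ht0def, ← Real.rpow_mul hTS.le, inv_mul_cancel₀ hMe, Real.rpow_one]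
      rw [← h1]
      exact Real.rpow_le_rpow_of_nonpos ht0 ht0b (by linarith)
    have hbF : F b ≤ T := by
      simp only [hF]
      calc (∑ i, lam i * ψ i u * b ^ (lam i - lamPhi)) ≤ ∑ i, lam i * ψ i u * b ^ (M - lamPhi) := by
            refine Finset.sum_le_sum fun i _ => ?_
            exact mul_le_mul_of_nonneg_left
              (Real.rpow_le_rpow_of_exponent_le hb1 (by linarith [hM i])) (hcoeff i)
        _ = S * b ^ (M - lamPhi) := by rw [hSdef, ← Finset.sum_mul]
        _ ≤ S * (T / S) := mul_le_mul_of_nonneg_left hbM hS.le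
        _ = T := by field_simp
    have hcont : ContinuousOn F (Set.Icc a b) := by
      simp only [hF]
      refine continuousOn_finset_sum _ fun i _ => ?_
      exact continuousOn_const.mul (fun x hx =>
        (Real.continuousAt_rpow_const x _
          (Or.inl (ne_of_gt (lt_of_lt_of_le ha hx.1)))).continuousWithinAt)
    obtain ⟨tstar, htsmem, hFt⟩ := intermediate_value_Icc' hab hcont ⟨hbF, haF⟩
    have htspos : 0 < tstar := lt_of_lt_of_le ha htsmem.1
    have hpoh : ∀ t : ℝ, 0 < t →
        ((∑ i, lam i * ψ i (star t u)) = lamPhi * Φ (star t u) ↔ F t = T) := by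
      intro t ht
      have hψs : ∑ i, lam i * ψ i (star t u) = F t * t ^ lamPhi := by
        rw [hF]
        rw [Finset.sum_mul]
        refine Finset.sum_congr rfl fun i _ => ?_
        rw [hX1 i t u ht.le,
          show lam i * ψ i u * t ^ (lam i - lamPhi) * t ^ lamPhi
            = lam i * ψ i u * (t ^ (lam i - lamPhi) * t ^ lamPhi) by ring,
          ← Real.rpow_add ht, sub_add_cancel]
        ring
      have hΦs : lamPhi * Φ (star t u) = T * t ^ lamPhi := by
        rw [hX2 t u ht.le, hTdef]; ring
      rw [hψs, hΦs]
      exact mul_left_inj' (Real.rpow_pos_of_pos ht lamPhi).ne'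
    have hPstar : (∑ i, lam i * ψ i (star tstar u)) = lamPhi * Φ (star tstar u) :=
      (hpoh tstar htspos).2 hFt
    have hpos2 : 0 < ∑ i, ψ i (star tstar u) := by
      calc (0:ℝ) < tstar ^ lam j * ψ j u := mul_pos (Real.rpow_pos_of_pos htspos _) hj
        _ = ψ j (star tstar u) := (hX1 j tstar u htspos.le).symm
        _ ≤ ∑ i, ψ i (star tstar u) :=
            Finset.single_le_sum (fun i _ => hψ i _) (Finset.mem_univ j)
    have hne0 : star tstar u ≠ 0 := fun h => hpos2.ne' ((hJ _).2 h)
    have hPs : ∑ i, lam i * (tstar ^ lam i * ψ i u) = lamPhi * (tstar ^ lamPhi * Φ u) := by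
      have h := hPstar
      rw [Finset.sum_congr rfl (fun i _ => by rw [hX1 i tstar u htspos.le]),
        hX2 tstar u htspos.le] at h
      exact h
    refine ⟨tstar, ⟨htspos, ⟨hne0, hPstar⟩, ?_⟩, ?_⟩
    · intro t ht
      have hcore := core_ineq lam lamPhi hlam hlt (fun i => tstar ^ lam i * ψ i u)
        (tstar ^ lamPhi * Φ u) (fun i => mul_nonneg (Real.rpow_nonneg htspos.le _) (hψ i u))
        hPs (div_nonneg ht htspos.le)
      have hk : ∀ lx : ℝ, (t / tstar) ^ lx * tstar ^ lx = t ^ lx := fun lx => by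
        rw [Real.div_rpow ht htspos.le,
          div_mul_cancel₀ _ (Real.rpow_pos_of_pos htspos lx).ne']
      have e1 : ∀ i : Fin (n+1), (t / tstar) ^ lam i * (tstar ^ lam i * ψ i u)
          = ψ i (star t u) := by
        intro i; rw [hX1 i t u ht, ← mul_assoc, hk]
      have e2 : (t / tstar) ^ lamPhi * (tstar ^ lamPhi * Φ u) = Φ (star t u) := by
        rw [hX2 t u ht, ← mul_assoc, hk]
      have e3 : ∀ i : Fin (n+1), tstar ^ lam i * ψ i u = ψ i (star tstar u) :=
        fun i => (hX1 i _ u htspos.le).symm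
      have e4 : tstar ^ lamPhi * Φ u = Φ (star tstar u) := (hX2 _ u htspos.le).symm
      rw [Finset.sum_congr rfl (fun i _ => e1 i), e2,
        Finset.sum_congr rfl (fun i _ => e3 i), e4] at hcore
      exact hcore
    · intro t ht hne hP
      exact hFanti.injOn (Set.mem_Ioi.2 ht) (Set.mem_Ioi.2 htspos)
        (((hpoh t ht).1 hP).trans hFt.symm)
  · intro u hu hP t ht
    have hcore := core_ineq lam lamPhi hlam hlt (fun i => ψ i u) (Φ u)
      (fun i => hψ i u) hP ht
    have e1 : ∀ i : Fin (n+1), ψ i (star t u) = t ^ lam i * ψ i u := fun i => hX1 i t u ht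
    rw [Finset.sum_congr rfl (fun i _ => e1 i), hX2 t u ht]
    exact hcore
end

section
/- In the abstract setting, assume additionally that I(u) ≥ I(u⁺) for all u ∈ X (where u⁺ denotes the positive part, lying in X⁺), and for u ∈ 𝒫 one has u⁺ ≠ 0 and Φ(u⁺) > 0. Then inf_{w∈𝒫} I(w) = inf_{w∈𝒫⁺} I(w), i.e. the infimum of I over the Pohozaev set equals the infimum over its nonnegative part. -/
lemma csInf_eq_of_subset_dom {S T : Set ℝ} (hST : S ⊆ T)
    (h : ∀ x ∈ T, ∃ y ∈ S, y ≤ x) : sInf T = sInf S := by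
  rcases T.eq_empty_or_nonempty with hT | hT
  · have hS : S = ∅ := Set.eq_empty_of_subset_empty (hT ▸ hST)
    rw [hT, hS]
  · obtain ⟨x, hx⟩ := hT
    obtain ⟨y, hyS, _⟩ := h x hx
    by_cases hb : BddBelow T
    · have hbS : BddBelow S := hb.mono hST
      apply le_antisymm
      · apply le_csInf ⟨y, hyS⟩
        intro z hz
        exact csInf_le hb (hST hz)
      · apply le_csInf ⟨x, hx⟩
        intro z hz
        obtain ⟨w, hwS, hwz⟩ := h z hz
        exact (csInf_le hbS hwS).trans hwz
    · have hbS : ¬ BddBelow S := by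
        intro hS
        apply hb
        obtain ⟨c, hc⟩ := hS
        refine ⟨c, fun z hz => ?_⟩
        obtain ⟨w, hwS, hwz⟩ := h z hz
        exact (hc hwS).trans hwz
      rw [Real.sInf_of_not_bddBelow hb, Real.sInf_of_not_bddBelow hbS]


theorem stmt17 {X : Type*} [NormedAddCommGroup X] {n : ℕ}
    (ψ : Fin (n + 1) → X → ℝ) (Φ : X → ℝ) (lam : Fin (n + 1) → ℝ) (lamPhi : ℝ)
    (hlam : ∀ i, 0 < lam i) (hlt : ∀ i, lam i < lamPhi)
    (star : ℝ → X → X)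
    (hX1 : ∀ i (t : ℝ) u, 0 ≤ t → ψ i (star t u) = t ^ lam i * ψ i u)
    (hX2 : ∀ (t : ℝ) u, 0 ≤ t → Φ (star t u) = t ^ lamPhi * Φ u)
    (hψ : ∀ i u, 0 ≤ ψ i u)
    (Xp : Set X) (pos : X → X) (hposXp : ∀ u, pos u ∈ Xp)
    (hstarXp : ∀ u ∈ Xp, ∀ t : ℝ, 0 ≤ t → star t u ∈ Xp)
    -- monotonicity under taking positive parts
    (hmon : ∀ (u : X) (t : ℝ), 0 ≤ t →
      (∑ i, ψ i (star t (pos u))) - Φ (star t (pos u)) ≤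
        (∑ i, ψ i (star t u)) - Φ (star t u))
    (hIpos : ∀ u : X, (∑ i, ψ i (pos u)) - Φ (pos u) ≤ (∑ i, ψ i u) - Φ u)
    -- for u in the Pohozaev set, the positive part is nontrivial
    (hne : ∀ u : X, u ≠ 0 → (∑ i, lam i * ψ i u) = lamPhi * Φ u →
      pos u ≠ 0 ∧ 0 < Φ (pos u))
    -- projection onto the Pohozaev set along dilations
    (hproj : ∀ v : X, 0 < Φ v → ∃ tplus : ℝ, 0 < tplus ∧ star tplus v ≠ 0 ∧
      (∑ i, lam i * ψ i (star tplus v)) = lamPhi * Φ (star tplus v) ∧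
      ∀ t : ℝ, 0 < t →
        (∑ i, ψ i (star t v)) - Φ (star t v) ≤
          (∑ i, ψ i (star tplus v)) - Φ (star tplus v))
    -- maximality along dilations on the Pohozaev set
    (hmax : ∀ u : X, u ≠ 0 → (∑ i, lam i * ψ i u) = lamPhi * Φ u →
      ∀ t : ℝ, 0 ≤ t → (∑ i, ψ i (star t u)) - Φ (star t u) ≤ (∑ i, ψ i u) - Φ u) :
    sInf ((fun u => (∑ i, ψ i u) - Φ u) ''
        {u : X | u ≠ 0 ∧ (∑ i, lam i * ψ i u) = lamPhi * Φ u})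
      = sInf ((fun u => (∑ i, ψ i u) - Φ u) ''
        ({u : X | u ≠ 0 ∧ (∑ i, lam i * ψ i u) = lamPhi * Φ u} ∩ Xp)) := by
  apply csInf_eq_of_subset_dom
  · exact Set.image_mono Set.inter_subset_left
  · rintro x ⟨u, ⟨hu0, huP⟩, rfl⟩
    obtain ⟨hp0, hpΦ⟩ := hne u hu0 huP
    obtain ⟨t, ht, hw0, hwP, hwmax⟩ := hproj (pos u) hpΦ
    refine ⟨(fun u => (∑ i, ψ i u) - Φ u) (star t (pos u)),
      ⟨star t (pos u), ⟨⟨hw0, hwP⟩, hstarXp (pos u) (hposXp u) t ht.le⟩, rfl⟩, ?_⟩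
    calc (∑ i, ψ i (star t (pos u))) - Φ (star t (pos u))
        ≤ (∑ i, ψ i (star t u)) - Φ (star t u) := hmon u t ht.le
      _ ≤ (∑ i, ψ i u) - Φ u := hmax u hu0 huP t ht.le
end
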